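/- Any two elements σ, τ of the symmetric group S_k have a unique least upper bound (join) with respect to the weak right Bruhat order: there exists Δ ∈ S_k with σ ≤ Δ and τ ≤ Δ, and such that any ω with σ ≤ ω and τ ≤ ω satisfies Δ ≤ ω. -/

import Mathlib

namespace WeakBruhat

def IsAdjWord (k : ℕ) (w : List (Equiv.Perm (Fin k))) : Prop :=
  ∀ s ∈ w, ∃ i : ℕ, ∃ h : i + 1 < k,
    s = Equiv.swap ⟨i, Nat.lt_of_succ_lt h⟩ ⟨i + 1, h⟩

noncomputable def len {k : ℕ} (σ : Equiv.Perm (Fin k)) : ℕ :=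
  sInf {m | ∃ w : List (Equiv.Perm (Fin k)), IsAdjWord k w ∧ w.length = m ∧ w.prod = σ}

def IsReducedWord {k : ℕ} (σ : Equiv.Perm (Fin k)) (w : List (Equiv.Perm (Fin k))) : Prop :=
  IsAdjWord k w ∧ w.prod = σ ∧ w.length = len σ

def WeakLE {k : ℕ} (σ τ : Equiv.Perm (Fin k)) : Prop :=
  ∃ w₁ w₂ : List (Equiv.Perm (Fin k)), IsReducedWord σ w₁ ∧ IsReducedWord τ (w₁ ++ w₂)

def InvSet {k : ℕ} (σ : Equiv.Perm (Fin k)) : Set (Fin k × Fin k) :=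
  {p | p.1 < p.2 ∧ σ⁻¹ p.2 < σ⁻¹ p.1}

def adj (k i : ℕ) (h : i + 1 < k) : Equiv.Perm (Fin k) :=
  Equiv.swap ⟨i, Nat.lt_of_succ_lt h⟩ ⟨i + 1, h⟩

/-- `Δ` is the join (least upper bound) of `σ` and `τ` in the weak right Bruhat order. -/
def IsJoin {k : ℕ} (σ τ Δ : Equiv.Perm (Fin k)) : Prop :=
  WeakLE σ Δ ∧ WeakLE τ Δ ∧ ∀ ω : Equiv.Perm (Fin k), WeakLE σ ω → WeakLE τ ω → WeakLE Δ ω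

variable {k : ℕ}

lemma perm_apply_inv_self {α : Type*} (σ : Equiv.Perm α) (a : α) : σ (σ⁻¹ a) = a :=
  Equiv.apply_symm_apply σ a

lemma perm_inv_apply_self {α : Type*} (σ : Equiv.Perm α) (a : α) : σ⁻¹ (σ a) = a :=
  Equiv.symm_apply_apply σ a

/-! ### basic facts about adj and inversion sets -/

lemma adj_mul_self (i : ℕ) (h : i + 1 < k) : adj k i h * adj k i h = 1 := by
  simp [adj, Equiv.swap_mul_self]

lemma mem_invSet {σ : Equiv.Perm (Fin k)} {p : Fin k × Fin k} :
    p ∈ InvSet σ ↔ p.1 < p.2 ∧ σ⁻¹ p.2 < σ⁻¹ p.1 := Iff.rfl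

lemma swap_lt_swap {x y u v : Fin k} (hxy : (x : ℕ) + 1 = (y : ℕ))
    (h1 : ¬(u = x ∧ v = y)) (h2 : ¬(u = y ∧ v = x)) :
    Equiv.swap x y u < Equiv.swap x y v ↔ u < v := by
  have hxy' : x ≠ y := by
    intro h; rw [h] at hxy; omega
  rcases eq_or_ne u x with rfl | hux
  · rcases eq_or_ne v u with rfl | hvu
    · simp
    · rcases eq_or_ne v y with rfl | hvy
      · exact absurd ⟨rfl, rfl⟩ h1
      · rw [Equiv.swap_apply_left, Equiv.swap_apply_of_ne_of_ne hvu hvy]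
        rw [Fin.lt_def, Fin.lt_def]
        have : (v : ℕ) ≠ u := fun h => hvu (Fin.ext h)
        have : (v : ℕ) ≠ y := fun h => hvy (Fin.ext h)
        omega
  · rcases eq_or_ne u y with rfl | huy
    · rcases eq_or_ne v x with rfl | hvx
      · exact absurd ⟨rfl, rfl⟩ h2
      · rcases eq_or_ne v u with rfl | hvu
        · simp
        · rw [Equiv.swap_apply_right, Equiv.swap_apply_of_ne_of_ne hvx hvu]
          rw [Fin.lt_def, Fin.lt_def]
          have : (v : ℕ) ≠ x := fun h => hvx (Fin.ext h)
          have : (v : ℕ) ≠ u := fun h => hvu (Fin.ext h)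
          omega
    · rw [Equiv.swap_apply_of_ne_of_ne hux huy]
      rcases eq_or_ne v x with rfl | hvx
      · rw [Equiv.swap_apply_left]
        rw [Fin.lt_def, Fin.lt_def]
        have : (u : ℕ) ≠ v := fun h => hux (Fin.ext h)
        have : (u : ℕ) ≠ y := fun h => huy (Fin.ext h)
        omega
      · rcases eq_or_ne v y with rfl | hvy
        · rw [Equiv.swap_apply_right]
          rw [Fin.lt_def, Fin.lt_def]
          have : (u : ℕ) ≠ x := fun h => hux (Fin.ext h)
          have : (u : ℕ) ≠ v := fun h => huy (Fin.ext h)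
          omega
        · rw [Equiv.swap_apply_of_ne_of_ne hvx hvy]

lemma mul_adj_inv_apply (σ : Equiv.Perm (Fin k)) (i : ℕ) (h : i + 1 < k) (a : Fin k) :
    (σ * adj k i h)⁻¹ a = Equiv.swap (⟨i, Nat.lt_of_succ_lt h⟩ : Fin k) ⟨i + 1, h⟩ (σ⁻¹ a) := by
  simp [adj, mul_inv_rev, Equiv.Perm.mul_apply]

lemma invSet_mul_adj_asc (σ : Equiv.Perm (Fin k)) (i : ℕ) (h : i + 1 < k)
    (hab : σ ⟨i, Nat.lt_of_succ_lt h⟩ < σ ⟨i + 1, h⟩) :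
    InvSet (σ * adj k i h) = InvSet σ ∪ {(σ ⟨i, Nat.lt_of_succ_lt h⟩, σ ⟨i + 1, h⟩)} := by
  have hxy : ((⟨i, Nat.lt_of_succ_lt h⟩ : Fin k) : ℕ) + 1 = ((⟨i + 1, h⟩ : Fin k) : ℕ) := rfl
  set x : Fin k := ⟨i, Nat.lt_of_succ_lt h⟩ with hxdef
  set y : Fin k := ⟨i + 1, h⟩ with hydef
  have hxylt : x < y := Fin.mk_lt_mk.2 (Nat.lt_succ_self i)
  have hxny : x ≠ y := ne_of_lt hxylt
  ext ⟨a, b⟩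
  simp only [mem_invSet, Set.mem_union, Set.mem_singleton_iff, mul_adj_inv_apply,
    Prod.mk.injEq]
  by_cases h1 : σ⁻¹ b = x ∧ σ⁻¹ a = y
  · have hb : b = σ x := by rw [← h1.1, perm_apply_inv_self]
    have ha : a = σ y := by rw [← h1.2, perm_apply_inv_self]
    have hna : ¬ a < b := by rw [ha, hb]; exact not_lt.2 hab.le
    have hne : a ≠ σ x := by rw [ha]; exact fun e => hxny (σ.injective e).symm
    constructor
    · rintro ⟨hlt, -⟩; exact absurd hlt hna
    · rintro (⟨hlt, -⟩ | ⟨e1, -⟩)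
      · exact absurd hlt hna
      · exact absurd e1 hne
  · by_cases h2 : σ⁻¹ b = y ∧ σ⁻¹ a = x
    · have hb : b = σ y := by rw [← h2.1, perm_apply_inv_self]
      have ha : a = σ x := by rw [← h2.2, perm_apply_inv_self]
      constructor
      · rintro -; right; exact ⟨ha, hb⟩
      · rintro -
        refine ⟨by rw [ha, hb]; exact hab, ?_⟩
        rw [h2.1, h2.2, Equiv.swap_apply_right, Equiv.swap_apply_left]
        exact hxylt
    · have hs := swap_lt_swap hxy h1 h2
      rw [hs]
      have hnp : ¬(a = σ x ∧ b = σ y) := by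
        rintro ⟨ea, eb⟩
        exact h2 ⟨by rw [eb, perm_inv_apply_self],
          by rw [ea, perm_inv_apply_self]⟩
      constructor
      · exact fun hh => Or.inl hh
      · rintro (hh | hh)
        · exact hh
        · exact absurd hh hnp

lemma invSet_mul_adj_desc (σ : Equiv.Perm (Fin k)) (i : ℕ) (h : i + 1 < k)
    (hba : σ ⟨i + 1, h⟩ < σ ⟨i, Nat.lt_of_succ_lt h⟩) :
    InvSet (σ * adj k i h) = InvSet σ \ {(σ ⟨i + 1, h⟩, σ ⟨i, Nat.lt_of_succ_lt h⟩)} := by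
  have hxy : ((⟨i, Nat.lt_of_succ_lt h⟩ : Fin k) : ℕ) + 1 = ((⟨i + 1, h⟩ : Fin k) : ℕ) := rfl
  set x : Fin k := ⟨i, Nat.lt_of_succ_lt h⟩ with hxdef
  set y : Fin k := ⟨i + 1, h⟩ with hydef
  have hxylt : x < y := Fin.mk_lt_mk.2 (Nat.lt_succ_self i)
  have hxny : x ≠ y := ne_of_lt hxylt
  ext ⟨a, b⟩
  simp only [mem_invSet, Set.mem_diff, Set.mem_singleton_iff, mul_adj_inv_apply,
    Prod.mk.injEq]
  by_cases h1 : σ⁻¹ b = x ∧ σ⁻¹ a = y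
  · have hb : b = σ x := by rw [← h1.1, perm_apply_inv_self]
    have ha : a = σ y := by rw [← h1.2, perm_apply_inv_self]
    constructor
    · rintro ⟨-, hlt⟩
      rw [h1.1, h1.2, Equiv.swap_apply_left, Equiv.swap_apply_right] at hlt
      exact absurd hlt (not_lt.2 hxylt.le)
    · rintro ⟨-, hne⟩
      exact absurd ⟨ha, hb⟩ hne
  · by_cases h2 : σ⁻¹ b = y ∧ σ⁻¹ a = x
    · have hb : b = σ y := by rw [← h2.1, perm_apply_inv_self]
      have ha : a = σ x := by rw [← h2.2, perm_apply_inv_self]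
      have hna : ¬ a < b := by rw [ha, hb]; exact not_lt.2 hba.le
      constructor
      · rintro ⟨hlt, -⟩; exact absurd hlt hna
      · rintro ⟨⟨hlt, -⟩, -⟩; exact absurd hlt hna
    · have hs := swap_lt_swap hxy h1 h2
      rw [hs]
      have hnp : ¬(a = σ y ∧ b = σ x) := by
        rintro ⟨ea, eb⟩
        exact h1 ⟨by rw [eb, perm_inv_apply_self],
          by rw [ea, perm_inv_apply_self]⟩
      exact ⟨fun hh => ⟨hh, hnp⟩, fun hh => hh.1⟩

noncomputable def invF (σ : Equiv.Perm (Fin k)) : Finset (Fin k × Fin k) :=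
  Set.Finite.toFinset (Set.toFinite (InvSet σ))

lemma mem_invF {σ : Equiv.Perm (Fin k)} {p : Fin k × Fin k} :
    p ∈ invF σ ↔ p ∈ InvSet σ := Set.Finite.mem_toFinset _

noncomputable def N (σ : Equiv.Perm (Fin k)) : ℕ := (invF σ).card

lemma invF_mono {σ τ : Equiv.Perm (Fin k)} (h : InvSet σ ⊆ InvSet τ) : invF σ ⊆ invF τ :=
  fun p hp => mem_invF.2 (h (mem_invF.1 hp))

lemma pair_not_mem_asc {σ : Equiv.Perm (Fin k)} {i : ℕ} {h : i + 1 < k} :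
    (σ ⟨i, Nat.lt_of_succ_lt h⟩, σ ⟨i + 1, h⟩) ∉ InvSet σ := by
  rintro ⟨-, hlt⟩
  simp only [perm_inv_apply_self] at hlt
  rw [Fin.lt_def] at hlt
  simp at hlt

lemma pair_mem_desc {σ : Equiv.Perm (Fin k)} {i : ℕ} {h : i + 1 < k}
    (hba : σ ⟨i + 1, h⟩ < σ ⟨i, Nat.lt_of_succ_lt h⟩) :
    (σ ⟨i + 1, h⟩, σ ⟨i, Nat.lt_of_succ_lt h⟩) ∈ InvSet σ := by
  refine ⟨hba, ?_⟩
  simp only [perm_inv_apply_self]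
  rw [Fin.lt_def]; simp

lemma N_asc (σ : Equiv.Perm (Fin k)) (i : ℕ) (h : i + 1 < k)
    (hab : σ ⟨i, Nat.lt_of_succ_lt h⟩ < σ ⟨i + 1, h⟩) :
    N (σ * adj k i h) = N σ + 1 := by
  have he : invF (σ * adj k i h) = insert (σ ⟨i, Nat.lt_of_succ_lt h⟩, σ ⟨i + 1, h⟩) (invF σ) := by
    ext p
    rw [mem_invF, invSet_mul_adj_asc σ i h hab, Finset.mem_insert, mem_invF]
    simp [Set.mem_union, or_comm]
  rw [N, he, Finset.card_insert_of_notMem (fun hm => pair_not_mem_asc (mem_invF.1 hm))]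
  rfl

lemma N_desc (σ : Equiv.Perm (Fin k)) (i : ℕ) (h : i + 1 < k)
    (hba : σ ⟨i + 1, h⟩ < σ ⟨i, Nat.lt_of_succ_lt h⟩) :
    N (σ * adj k i h) + 1 = N σ := by
  have he : invF (σ * adj k i h) = (invF σ).erase (σ ⟨i + 1, h⟩, σ ⟨i, Nat.lt_of_succ_lt h⟩) := by
    ext p
    rw [mem_invF, invSet_mul_adj_desc σ i h hba, Finset.mem_erase, mem_invF]
    simp [Set.mem_diff, and_comm]
  have hm : (σ ⟨i + 1, h⟩, σ ⟨i, Nat.lt_of_succ_lt h⟩) ∈ invF σ := mem_invF.2 (pair_mem_desc hba)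
  rw [N, N, he, Finset.card_erase_of_mem hm]
  have : 0 < (invF σ).card := Finset.card_pos.2 ⟨_, hm⟩
  omega

/-! ### length equals inversion number -/

lemma lt_adj_pair (i : ℕ) (h : i + 1 < k) :
    (⟨i, Nat.lt_of_succ_lt h⟩ : Fin k) < ⟨i + 1, h⟩ :=
  Fin.mk_lt_mk.2 (Nat.lt_succ_self i)

lemma adj_trichotomy (σ : Equiv.Perm (Fin k)) (i : ℕ) (h : i + 1 < k) :
    σ ⟨i, Nat.lt_of_succ_lt h⟩ < σ ⟨i + 1, h⟩ ∨ σ ⟨i + 1, h⟩ < σ ⟨i, Nat.lt_of_succ_lt h⟩ := by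
  have hne : σ ⟨i, Nat.lt_of_succ_lt h⟩ ≠ σ ⟨i + 1, h⟩ :=
    fun e => absurd (σ.injective e) (ne_of_lt (lt_adj_pair i h))
  exact lt_or_gt_of_ne hne

lemma eq_one_of_strictMono {σ : Equiv.Perm (Fin k)} (hsm : StrictMono ⇑σ) : σ = 1 := by
  cases k with
  | zero => exact Subsingleton.elim _ _
  | succ n =>
    have hrange : Set.range ⇑σ = Set.range (id : Fin (n+1) → Fin (n+1)) := by
      rw [Set.range_id, Set.range_eq_univ]
      exact σ.surjective
    have hid := (@StrictMono.range_inj (Fin (n+1)) (Fin (n+1))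
      (inferInstance : LinearOrder (Fin (n+1))) (inferInstance : Preorder (Fin (n+1)))
      (inferInstance : WellFoundedLT (Fin (n+1))) _ id hsm strictMono_id).1 hrange
    exact Equiv.ext fun a => congrFun hid a

lemma eq_one_of_all_asc {σ : Equiv.Perm (Fin k)}
    (ha : ∀ (i : ℕ) (h : i + 1 < k), σ ⟨i, Nat.lt_of_succ_lt h⟩ < σ ⟨i + 1, h⟩) :
    σ = 1 := by
  apply eq_one_of_strictMono
  cases k with
  | zero => exact fun x => absurd x.isLt (by omega)
  | succ n =>
    rw [Fin.strictMono_iff_lt_succ]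
    intro i
    exact ha i.val (Nat.succ_lt_succ i.isLt)

lemma N_one : N (1 : Equiv.Perm (Fin k)) = 0 := by
  rw [N, Finset.card_eq_zero]
  ext p
  simp only [mem_invF, mem_invSet, Finset.notMem_empty, iff_false]
  rintro ⟨h1, h2⟩
  simp only [inv_one, Equiv.Perm.one_apply] at h2
  exact absurd h1 (not_lt.2 h2.le)

lemma exists_word_of_N : ∀ (n : ℕ) (σ : Equiv.Perm (Fin k)), N σ = n →
    ∃ w : List (Equiv.Perm (Fin k)), IsAdjWord k w ∧ w.length = n ∧ w.prod = σ := by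
  intro n
  induction n with
  | zero =>
    intro σ hσ
    have hF : invF σ = ∅ := Finset.card_eq_zero.1 hσ
    have h1 : σ = 1 := by
      apply eq_one_of_all_asc
      intro i h
      rcases adj_trichotomy σ i h with hc | hc
      · exact hc
      · have : _ ∈ (∅ : Finset (Fin k × Fin k)) := hF ▸ mem_invF.2 (pair_mem_desc hc)
        simp at this
    exact ⟨[], by intro s hs; simp at hs, rfl, by rw [h1]; rfl⟩
  | succ n ih =>
    intro σ hσ
    have hdesc : ∃ (i : ℕ) (h : i + 1 < k), σ ⟨i + 1, h⟩ < σ ⟨i, Nat.lt_of_succ_lt h⟩ := by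
      by_contra hno
      push_neg at hno
      have h1 : σ = 1 := by
        apply eq_one_of_all_asc
        intro i h
        rcases adj_trichotomy σ i h with hc | hc
        · exact hc
        · exact absurd hc (by have := hno i h; exact not_lt.2 this)
      rw [h1, N_one] at hσ
      omega
    obtain ⟨i, h, hd⟩ := hdesc
    have hN : N (σ * adj k i h) = n := by have := N_desc σ i h hd; omega
    obtain ⟨w', hw', hl', hp'⟩ := ih _ hN
    refine ⟨w' ++ [adj k i h], ?_, by simp [hl'], ?_⟩
    · intro s hs
      rcases List.mem_append.1 hs with hs | hs
      · exact hw' s hs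
      · simp at hs
        exact ⟨i, h, hs⟩
    · rw [List.prod_append, List.prod_singleton, hp', mul_assoc, adj_mul_self, mul_one]

lemma N_mul_adj_le (σ : Equiv.Perm (Fin k)) (i : ℕ) (h : i + 1 < k) :
    N (σ * adj k i h) ≤ N σ + 1 := by
  rcases adj_trichotomy σ i h with hc | hc
  · rw [N_asc σ i h hc]
  · have := N_desc σ i h hc; omega

lemma N_mul_word_le (w : List (Equiv.Perm (Fin k))) (hw : IsAdjWord k w) :
    ∀ σ : Equiv.Perm (Fin k), N (σ * w.prod) ≤ N σ + w.length := by
  induction w with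
  | nil => intro σ; simp
  | cons s w' ih =>
    intro σ
    obtain ⟨i, h, hs⟩ := hw s (List.mem_cons_self (a := s) (l := w'))
    have hw' : IsAdjWord k w' := fun t ht => hw t (List.mem_cons_of_mem _ ht)
    have h1 : σ * (s :: w').prod = (σ * s) * w'.prod := by
      rw [List.prod_cons, mul_assoc]
    have h2 : N (σ * s) ≤ N σ + 1 := by
      have : s = adj k i h := hs
      rw [this]; exact N_mul_adj_le σ i h
    calc N (σ * (s :: w').prod) = N ((σ * s) * w'.prod) := by rw [h1]
      _ ≤ N (σ * s) + w'.length := ih hw' _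
      _ ≤ N σ + 1 + w'.length := by omega
      _ = N σ + (s :: w').length := by simp [Nat.add_comm, Nat.add_assoc]
  
lemma len_eq_N (σ : Equiv.Perm (Fin k)) : len σ = N σ := by
  obtain ⟨w, hw, hl, hp⟩ := exists_word_of_N (N σ) σ rfl
  have hmem : N σ ∈ {m | ∃ w : List (Equiv.Perm (Fin k)),
      IsAdjWord k w ∧ w.length = m ∧ w.prod = σ} := ⟨w, hw, hl, hp⟩
  apply le_antisymm
  · exact Nat.sInf_le hmem
  · refine le_csInf ⟨N σ, hmem⟩ ?_
    rintro m ⟨w', hw', hl', hp'⟩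
    have := N_mul_word_le w' hw' 1
    rw [one_mul, hp', N_one] at this
    omega

lemma exists_reduced (σ : Equiv.Perm (Fin k)) : ∃ w, IsReducedWord σ w := by
  obtain ⟨w, hw, hl, hp⟩ := exists_word_of_N (N σ) σ rfl
  exact ⟨w, hw, hp, by rw [hl, len_eq_N]⟩

/-! ### order characterization via inversion sets -/

lemma inv_lt_of_not_mem {τ : Equiv.Perm (Fin k)} {a b : Fin k} (hab : a < b)
    (h : (a, b) ∉ InvSet τ) : τ⁻¹ a < τ⁻¹ b := by
  have h1 : ¬ (τ⁻¹ b < τ⁻¹ a) := fun hc => h ⟨hab, hc⟩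
  have hne : τ⁻¹ a ≠ τ⁻¹ b :=
    fun e => (ne_of_lt hab) (τ⁻¹.injective e)
  exact lt_of_le_of_ne (not_lt.1 h1) hne

lemma eq_of_invSet_eq {σ τ : Equiv.Perm (Fin k)} (h : InvSet σ = InvSet τ) : σ = τ := by
  have key : StrictMono ⇑(τ⁻¹ * σ) := by
    intro x y hxy
    have hxyne : σ x ≠ σ y := fun e => (ne_of_lt hxy) (σ.injective e)
    simp only [Equiv.Perm.mul_apply]
    rcases lt_or_gt_of_ne hxyne with hc | hc
    · have hmem : (σ x, σ y) ∉ InvSet σ := by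
        rintro ⟨-, hlt⟩
        simp only [perm_inv_apply_self] at hlt
        exact absurd hxy (not_lt.2 hlt.le)
      exact inv_lt_of_not_mem hc (h ▸ hmem)
    · have hmem : (σ y, σ x) ∈ InvSet σ := by
        refine ⟨hc, ?_⟩
        simp only [perm_inv_apply_self]
        exact hxy
      rw [h] at hmem
      exact hmem.2
  have h1 : τ⁻¹ * σ = 1 := eq_one_of_strictMono key
  have := inv_mul_eq_one.1 h1
  exact this.symm

lemma invSet_subset_adj_of_N {σ : Equiv.Perm (Fin k)} {i : ℕ} {h : i + 1 < k}
    (hN : N (σ * adj k i h) = N σ + 1) : InvSet σ ⊆ InvSet (σ * adj k i h) := by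
  rcases adj_trichotomy σ i h with hc | hc
  · rw [invSet_mul_adj_asc σ i h hc]
    exact Set.subset_union_left
  · have := N_desc σ i h hc
    omega

lemma invSet_subset_of_word : ∀ (w : List (Equiv.Perm (Fin k))), IsAdjWord k w →
    ∀ σ : Equiv.Perm (Fin k), N (σ * w.prod) = N σ + w.length →
      InvSet σ ⊆ InvSet (σ * w.prod) := by
  intro w
  induction w with
  | nil => intro _ σ _; simp
  | cons s w' ih =>
    intro hw σ hN
    obtain ⟨i, h, hs⟩ := hw s (List.mem_cons_self (a := s) (l := w'))
    have hw' : IsAdjWord k w' := fun t ht => hw t (List.mem_cons_of_mem _ ht)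
    have hassoc : σ * (s :: w').prod = (σ * s) * w'.prod := by
      rw [List.prod_cons, mul_assoc]
    have hb1 : N ((σ * s) * w'.prod) ≤ N (σ * s) + w'.length := N_mul_word_le w' hw' _
    have hb2 : N (σ * s) ≤ N σ + 1 := by rw [hs]; exact N_mul_adj_le σ i h
    have hlen : (s :: w').length = w'.length + 1 := rfl
    rw [hassoc] at hN ⊢
    have hNs : N (σ * s) = N σ + 1 := by omega
    have step1 : InvSet σ ⊆ InvSet (σ * s) := by
      rw [hs] at hNs ⊢
      exact invSet_subset_adj_of_N hNs
    have step2 : InvSet (σ * s) ⊆ InvSet ((σ * s) * w'.prod) := by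
      apply ih hw'
      omega
    exact step1.trans step2

lemma invSet_subset_of_weakLE {σ τ : Equiv.Perm (Fin k)} (h : WeakLE σ τ) :
    InvSet σ ⊆ InvSet τ := by
  obtain ⟨w₁, w₂, ⟨ha1, hp1, hl1⟩, ⟨ha2, hp2, hl2⟩⟩ := h
  have hw2 : IsAdjWord k w₂ := fun t ht => ha2 t (List.mem_append_right _ ht)
  have hτ : σ * w₂.prod = τ := by rw [← hp1, ← List.prod_append, hp2]
  have hNτ : N (σ * w₂.prod) = N σ + w₂.length := by
    rw [hτ, ← len_eq_N, ← len_eq_N, ← hl1, ← hl2]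
    simp
  have := invSet_subset_of_word w₂ hw2 σ hNτ
  rwa [hτ] at this

lemma exists_asc_step {σ τ : Equiv.Perm (Fin k)} (hsub : InvSet σ ⊆ InvSet τ)
    (hne : σ ≠ τ) :
    ∃ (i : ℕ) (h : i + 1 < k), σ ⟨i, Nat.lt_of_succ_lt h⟩ < σ ⟨i + 1, h⟩ ∧
      (σ ⟨i, Nat.lt_of_succ_lt h⟩, σ ⟨i + 1, h⟩) ∈ InvSet τ := by
  have hD : ((invF τ) \ (invF σ)).Nonempty := by
    rw [Finset.sdiff_nonempty]
    intro hc
    apply hne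
    apply eq_of_invSet_eq
    apply Set.Subset.antisymm hsub
    intro p hp
    exact mem_invF.1 (hc (mem_invF.2 hp))
  obtain ⟨p, hpD, hmin⟩ := Finset.exists_min_image _
    (fun p => (σ⁻¹ p.2 : ℕ) - (σ⁻¹ p.1 : ℕ)) hD
  obtain ⟨a, b⟩ := p
  rw [Finset.mem_sdiff, mem_invF, mem_invF] at hpD
  obtain ⟨hpτ, hpσ⟩ := hpD
  have hab : a < b := hpτ.1
  have hposn : σ⁻¹ a < σ⁻¹ b := inv_lt_of_not_mem hab hpσ
  set q := σ⁻¹ a with hqdef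
  set r := σ⁻¹ b with hrdef
  have ha : σ q = a := perm_apply_inv_self σ a
  have hb : σ r = b := perm_apply_inv_self σ b
  have hr1 : (r : ℕ) = (q : ℕ) + 1 := by
    by_contra hgap
    have hqr : (q : ℕ) + 1 < (r : ℕ) := by
      rw [Fin.lt_def] at hposn; omega
    have hmk : (q : ℕ) + 1 < k := lt_trans hqr r.isLt
    set m : Fin k := ⟨(q : ℕ) + 1, hmk⟩ with hmdef
    set c := σ m with hcdef
    have hcm : σ⁻¹ c = m := perm_inv_apply_self σ m
    have hqm : q < m := by rw [Fin.lt_def, hmdef]; simp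
    have hmr : m < r := by rw [Fin.lt_def, hmdef]; simpa using hqr
    have hca : c ≠ a := by
      intro e
      rw [← ha] at e
      have := σ.injective e
      rw [this] at hqm
      exact lt_irrefl _ hqm
    have hcb : c ≠ b := by
      intro e
      rw [← hb] at e
      have := σ.injective e
      rw [this] at hmr
      exact lt_irrefl _ hmr
    -- (a, c) or (c, a); (b, c) or (c, b) facts
    rcases lt_or_gt_of_ne hca with hcla | halc
    · -- c < a < b
      -- (c, a) ∈ InvSet σ ⊆ InvSet τ
      have h1 : (c, a) ∈ InvSet τ := hsub ⟨hcla, by rw [hcm]; exact hqm⟩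
      -- (c, b) ∉ InvSet σ
      have h2 : (c, b) ∉ InvSet σ := by
        rintro ⟨-, hlt⟩
        rw [hcm] at hlt
        exact absurd hmr (not_lt.2 hlt.le)
      -- (c, b) ∉ InvSet τ by minimality
      have h3 : (c, b) ∉ InvSet τ := by
        intro h3
        have hmem : ((c, b) : Fin k × Fin k) ∈ (invF τ) \ (invF σ) := by
          rw [Finset.mem_sdiff, mem_invF, mem_invF]; exact ⟨h3, h2⟩
        have := hmin _ hmem
        simp only [hcm] at this
        rw [Fin.lt_def] at hposn hqm
        omega
      -- contradiction: τ-order cycle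
      have e1 : τ⁻¹ b < τ⁻¹ a := hpτ.2
      have e2 : τ⁻¹ a < τ⁻¹ c := h1.2
      have e3 : τ⁻¹ c < τ⁻¹ b := inv_lt_of_not_mem (lt_trans hcla hab) h3
      exact absurd (lt_trans (lt_trans e1 e2) e3) (lt_irrefl _)
    · -- a < c
      -- (a, c) ∉ InvSet σ
      have h2 : (a, c) ∉ InvSet σ := by
        rintro ⟨-, hlt⟩
        rw [hcm] at hlt
        exact absurd hqm (not_lt.2 hlt.le)
      -- (a, c) ∉ InvSet τ by minimality
      have h3 : (a, c) ∉ InvSet τ := by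
        intro h3
        have hmem : ((a, c) : Fin k × Fin k) ∈ (invF τ) \ (invF σ) := by
          rw [Finset.mem_sdiff, mem_invF, mem_invF]; exact ⟨h3, h2⟩
        have := hmin _ hmem
        simp only [hcm] at this
        rw [Fin.lt_def] at hposn hmr
        omega
      have e1 : τ⁻¹ a < τ⁻¹ c := inv_lt_of_not_mem halc h3
      rcases lt_or_gt_of_ne hcb with hclb | hblc
      · -- a < c < b : (c, b) ∉ both, chain a < c < b in τ contradicts (a,b) ∈ InvSet τ
        have h4 : (c, b) ∉ InvSet σ := by
          rintro ⟨-, hlt⟩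
          rw [hcm] at hlt
          exact absurd hmr (not_lt.2 hlt.le)
        have h5 : (c, b) ∉ InvSet τ := by
          intro h5
          have hmem : ((c, b) : Fin k × Fin k) ∈ (invF τ) \ (invF σ) := by
            rw [Finset.mem_sdiff, mem_invF, mem_invF]; exact ⟨h5, h4⟩
          have := hmin _ hmem
          simp only [hcm] at this
          rw [Fin.lt_def] at hposn hqm
          omega
        have e2 : τ⁻¹ c < τ⁻¹ b := inv_lt_of_not_mem hclb h5
        have e3 : τ⁻¹ b < τ⁻¹ a := hpτ.2
        exact absurd (lt_trans (lt_trans e1 e2) e3) (lt_irrefl _)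
      · -- b < c : (b, c) ∈ InvSet σ ⊆ InvSet τ
        have h4 : (b, c) ∈ InvSet τ := hsub ⟨hblc, by rw [hcm]; exact hmr⟩
        have e2 : τ⁻¹ c < τ⁻¹ b := h4.2
        have e3 : τ⁻¹ b < τ⁻¹ a := hpτ.2
        exact absurd (lt_trans (lt_trans e1 e2) e3) (lt_irrefl _)
  refine ⟨(q : ℕ), by omega, ?_, ?_⟩
  · have hq' : (⟨(q : ℕ), _⟩ : Fin k) = q := Fin.ext rfl
    have hr' : (⟨(q : ℕ) + 1, by omega⟩ : Fin k) = r := Fin.ext hr1.symm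
    rw [hq', hr', ha, hb]
    exact hab
  · have hq' : (⟨(q : ℕ), _⟩ : Fin k) = q := Fin.ext rfl
    have hr' : (⟨(q : ℕ) + 1, by omega⟩ : Fin k) = r := Fin.ext hr1.symm
    rw [hq', hr', ha, hb]
    exact hpτ

lemma exists_extension : ∀ (d : ℕ) (σ τ : Equiv.Perm (Fin k)),
    InvSet σ ⊆ InvSet τ → N τ = N σ + d →
    ∃ w : List (Equiv.Perm (Fin k)), IsAdjWord k w ∧ σ * w.prod = τ ∧ w.length = d := by
  intro d
  induction d with
  | zero =>
    intro σ τ hsub hN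
    have hF : invF σ = invF τ :=
      Finset.eq_of_subset_of_card_le (invF_mono hsub)
        (le_of_eq (show (invF τ).card = (invF σ).card by
          have h2 : N τ = N σ := by omega
          exact h2))
    have : InvSet σ = InvSet τ := by
      ext p
      rw [← mem_invF, ← mem_invF, hF]
    rw [eq_of_invSet_eq this]
    exact ⟨[], by intro s hs; simp at hs, by simp, rfl⟩
  | succ d ih =>
    intro σ τ hsub hN
    have hne : σ ≠ τ := by
      rintro rfl
      omega
    obtain ⟨i, h, hasc, hmem⟩ := exists_asc_step hsub hne
    have hsub' : InvSet (σ * adj k i h) ⊆ InvSet τ := by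
      rw [invSet_mul_adj_asc σ i h hasc]
      rintro p (hp | hp)
      · exact hsub hp
      · rw [Set.mem_singleton_iff] at hp
        rw [hp]
        exact hmem
    have hN' : N τ = N (σ * adj k i h) + d := by
      rw [N_asc σ i h hasc]
      omega
    obtain ⟨w', hw', hp', hl'⟩ := ih _ _ hsub' hN'
    refine ⟨adj k i h :: w', ?_, ?_, by simp [hl']⟩
    · intro s hs
      rcases List.mem_cons.1 hs with rfl | hs
      · exact ⟨i, h, rfl⟩
      · exact hw' s hs
    · rw [List.prod_cons, ← mul_assoc, hp']

lemma weakLE_of_invSet_subset {σ τ : Equiv.Perm (Fin k)} (hsub : InvSet σ ⊆ InvSet τ) :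
    WeakLE σ τ := by
  have hle : N σ ≤ N τ := Finset.card_le_card (invF_mono hsub)
  obtain ⟨w, hw, hp, hl⟩ := exists_extension (N τ - N σ) σ τ hsub (by omega)
  obtain ⟨w₁, hw₁, hp₁, hl₁⟩ := exists_reduced σ
  refine ⟨w₁, w, ⟨hw₁, hp₁, hl₁⟩, ?_, ?_, ?_⟩
  · intro s hs
    rcases List.mem_append.1 hs with hs | hs
    · exact hw₁ s hs
    · exact hw s hs
  · rw [List.prod_append, hp₁, hp]
  · rw [List.length_append, hl₁, hl, len_eq_N σ, len_eq_N τ]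
    omega

lemma weakLE_iff {σ τ : Equiv.Perm (Fin k)} : WeakLE σ τ ↔ InvSet σ ⊆ InvSet τ :=
  ⟨invSet_subset_of_weakLE, weakLE_of_invSet_subset⟩

/-! ### closure properties of inversion sets -/

lemma invSet_closed {σ : Equiv.Perm (Fin k)} {a b c : Fin k}
    (h1 : (a, b) ∈ InvSet σ) (h2 : (b, c) ∈ InvSet σ) : (a, c) ∈ InvSet σ :=
  ⟨lt_trans h1.1 h2.1, lt_trans h2.2 h1.2⟩

lemma invSet_co_closed {σ : Equiv.Perm (Fin k)} {a b c : Fin k}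
    (hab : a < b) (hbc : b < c)
    (h1 : (a, b) ∉ InvSet σ) (h2 : (b, c) ∉ InvSet σ) : (a, c) ∉ InvSet σ := by
  rintro ⟨-, hlt⟩
  exact absurd (lt_trans (inv_lt_of_not_mem hab h1) (inv_lt_of_not_mem hbc h2))
    (not_lt.2 hlt.le)

/-! ### the join construction -/

section Join

variable (σ τ : Equiv.Perm (Fin k))

def rrel (a b : Fin k) : Prop := (a, b) ∈ InvSet σ ∨ (a, b) ∈ InvSet τ

def Crel : Fin k → Fin k → Prop := Relation.TransGen (rrel σ τ)

variable {σ τ}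

lemma rrel_lt {a b : Fin k} (h : rrel σ τ a b) : a < b := by
  rcases h with h | h
  · exact h.1
  · exact h.1

lemma Crel_lt {a b : Fin k} (h : Crel σ τ a b) : a < b := by
  induction h with
  | single h => exact rrel_lt h
  | tail _ h ih => exact lt_trans ih (rrel_lt h)

lemma rrel_split {a b c : Fin k} (h : rrel σ τ a c) (hab : a < b) (hbc : b < c) :
    rrel σ τ a b ∨ rrel σ τ b c := by
  rcases h with h | h
  · by_cases h1 : (a, b) ∈ InvSet σ
    · exact Or.inl (Or.inl h1)
    · by_cases h2 : (b, c) ∈ InvSet σ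
      · exact Or.inr (Or.inl h2)
      · exact absurd h (invSet_co_closed hab hbc h1 h2)
  · by_cases h1 : (a, b) ∈ InvSet τ
    · exact Or.inl (Or.inr h1)
    · by_cases h2 : (b, c) ∈ InvSet τ
      · exact Or.inr (Or.inr h2)
      · exact absurd h (invSet_co_closed hab hbc h1 h2)

lemma Crel_split {a c : Fin k} (h : Crel σ τ a c) :
    ∀ b : Fin k, a < b → b < c → Crel σ τ a b ∨ Crel σ τ b c := by
  induction h with
  | single h =>
    intro b hab hbc
    rcases rrel_split h hab hbc with h | h
    · exact Or.inl (Relation.TransGen.single h)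
    · exact Or.inr (Relation.TransGen.single h)
  | @tail d c hC hr ih =>
    intro b hab hbc
    rcases lt_trichotomy b d with hbd | rfl | hdb
    · rcases ih b hab hbd with h | h
      · exact Or.inl h
      · exact Or.inr (h.tail hr)
    · exact Or.inl hC
    · rcases rrel_split hr hdb hbc with h | h
      · exact Or.inl (hC.tail h)
      · exact Or.inr (Relation.TransGen.single h)

def plt (σ τ : Equiv.Perm (Fin k)) (a b : Fin k) : Prop :=
  (a < b ∧ ¬ Crel σ τ a b) ∨ (b < a ∧ Crel σ τ b a)

lemma plt_irrefl (a : Fin k) : ¬ plt σ τ a a := by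
  rintro (⟨h, -⟩ | ⟨h, -⟩) <;> exact lt_irrefl _ h

lemma plt_total {a b : Fin k} (h : a ≠ b) : plt σ τ a b ∨ plt σ τ b a := by
  rcases lt_or_gt_of_ne h with hab | hba
  · by_cases hC : Crel σ τ a b
    · exact Or.inr (Or.inr ⟨hab, hC⟩)
    · exact Or.inl (Or.inl ⟨hab, hC⟩)
  · by_cases hC : Crel σ τ b a
    · exact Or.inl (Or.inr ⟨hba, hC⟩)
    · exact Or.inr (Or.inl ⟨hba, hC⟩)

lemma plt_asymm {a b : Fin k} (h1 : plt σ τ a b) (h2 : plt σ τ b a) : False := by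
  rcases h1 with ⟨hab, hn⟩ | ⟨hba, hC⟩ <;> rcases h2 with ⟨h2', hn'⟩ | ⟨h2', hC'⟩
  · exact absurd hab (not_lt.2 h2'.le)
  · exact hn hC'
  · exact hn' hC
  · exact absurd hba (not_lt.2 h2'.le)

lemma plt_trans {a b c : Fin k} (h1 : plt σ τ a b) (h2 : plt σ τ b c) : plt σ τ a c := by
  rcases h1 with ⟨hab, hnab⟩ | ⟨hba, hCba⟩
  · rcases h2 with ⟨hbc, hnbc⟩ | ⟨hcb, hCcb⟩
    · -- a < b < c, neither in C
      refine Or.inl ⟨lt_trans hab hbc, fun hC => ?_⟩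
      rcases Crel_split hC b hab hbc with h | h
      · exact hnab h
      · exact hnbc h
    · -- a < b, c < b, C c b
      rcases lt_trichotomy a c with hac | rfl | hca
      · refine Or.inl ⟨hac, fun hC => hnab (Relation.TransGen.trans hC hCcb)⟩
      · exact absurd hCcb hnab
      · refine Or.inr ⟨hca, ?_⟩
        rcases Crel_split hCcb a hca hab with h | h
        · exact h
        · exact absurd h hnab
  · rcases h2 with ⟨hbc, hnbc⟩ | ⟨hcb, hCcb⟩
    · -- b < a, C b a, b < c, ¬ C b c
      rcases lt_trichotomy a c with hac | rfl | hca
      · refine Or.inl ⟨hac, fun hC => hnbc (Relation.TransGen.trans hCba hC)⟩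
      · exact absurd hCba hnbc
      · refine Or.inr ⟨hca, ?_⟩
        rcases Crel_split hCba c hbc hca with h | h
        · exact absurd h hnbc
        · exact h
    · -- c < b < a
      exact Or.inr ⟨lt_trans hcb hba, Relation.TransGen.trans hCcb hCba⟩

open Classical in
noncomputable def rank (σ τ : Equiv.Perm (Fin k)) (a : Fin k) : ℕ :=
  (Finset.univ.filter (fun b => plt σ τ b a)).card

lemma rank_lt_rank {a b : Fin k} (h : plt σ τ a b) : rank σ τ a < rank σ τ b := by
  classical
  apply Finset.card_lt_card
  rw [Finset.ssubset_iff_of_subset]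
  · refine ⟨a, ?_, ?_⟩
    · simp only [Finset.mem_filter, Finset.mem_univ, true_and]
      convert h using 2
    · simp only [Finset.mem_filter, Finset.mem_univ, true_and]
      intro hc
      exact plt_irrefl a (by convert hc using 2)
  · intro x hx
    simp only [Finset.mem_filter, Finset.mem_univ, true_and] at hx ⊢
    have hx' : plt σ τ x a := by convert hx using 2
    have := plt_trans hx' h
    convert this using 2

lemma rank_lt_card (a : Fin k) : rank σ τ a < k := by
  classical
  have h1 : (Finset.univ.filter (fun b => plt σ τ b a)) ⊆ Finset.univ.erase a := by
    intro x hx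
    simp only [Finset.mem_filter, Finset.mem_univ, true_and] at hx
    rw [Finset.mem_erase]
    refine ⟨fun e => ?_, Finset.mem_univ x⟩
    subst e
    exact plt_irrefl x (by convert hx using 2)
  have h2 := Finset.card_le_card h1
  have h3 : (Finset.univ.erase a).card = k - 1 := by
    rw [Finset.card_erase_of_mem (Finset.mem_univ a)]
    simp
  have h4 : 0 < k := Fin.pos a
  have := (le_of_le_of_eq h2 h3)
  calc rank σ τ a ≤ (Finset.univ.filter (fun b => plt σ τ b a)).card := by
        apply le_of_eq
        unfold rank
        congr
    _ ≤ k - 1 := le_of_le_of_eq (Finset.card_le_card h1) h3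
    _ < k := by omega

noncomputable def rankF (σ τ : Equiv.Perm (Fin k)) (a : Fin k) : Fin k :=
  ⟨rank σ τ a, rank_lt_card a⟩

lemma rankF_injective : Function.Injective (rankF σ τ) := by
  intro a b hab
  by_contra hne
  have hval : rank σ τ a = rank σ τ b := congrArg Fin.val hab
  rcases plt_total (σ := σ) (τ := τ) hne with h | h
  · have := rank_lt_rank h
    omega
  · have := rank_lt_rank h
    omega

lemma rankF_lt_iff {a b : Fin k} : rankF σ τ a < rankF σ τ b ↔ plt σ τ a b := by
  constructor
  · intro h
    rcases eq_or_ne a b with rfl | hne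
    · exact absurd h (lt_irrefl _)
    · rcases plt_total (σ := σ) (τ := τ) hne with hp | hp
      · exact hp
      · have h2 := rank_lt_rank hp
        have h3 : rank σ τ a < rank σ τ b := h
        omega
  · intro h
    rw [Fin.lt_def]
    exact rank_lt_rank h

noncomputable def joinPerm (σ τ : Equiv.Perm (Fin k)) : Equiv.Perm (Fin k) :=
  (Equiv.ofBijective (rankF σ τ)
    (Finite.injective_iff_bijective.1 rankF_injective)).symm

lemma joinPerm_inv_apply (a : Fin k) : (joinPerm σ τ)⁻¹ a = rankF σ τ a := by
  have : (joinPerm σ τ)⁻¹ = (joinPerm σ τ).symm := rfl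
  rw [this, joinPerm, Equiv.symm_symm]
  rfl

lemma invSet_joinPerm {p : Fin k × Fin k} :
    p ∈ InvSet (joinPerm σ τ) ↔ p.1 < p.2 ∧ Crel σ τ p.1 p.2 := by
  obtain ⟨a, b⟩ := p
  rw [mem_invSet]
  simp only [joinPerm_inv_apply]
  constructor
  · rintro ⟨hab, hlt⟩
    refine ⟨hab, ?_⟩
    rcases rankF_lt_iff.1 hlt with ⟨hba, -⟩ | ⟨hab', hC⟩
    · exact absurd hab (not_lt.2 hba.le)
    · exact hC
  · rintro ⟨hab, hC⟩
    exact ⟨hab, rankF_lt_iff.2 (Or.inr ⟨hab, hC⟩)⟩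

lemma invSet_subset_joinPerm_left : InvSet σ ⊆ InvSet (joinPerm σ τ) := by
  rintro ⟨a, b⟩ hp
  rw [invSet_joinPerm]
  exact ⟨hp.1, Relation.TransGen.single (Or.inl hp)⟩

lemma invSet_subset_joinPerm_right : InvSet τ ⊆ InvSet (joinPerm σ τ) := by
  rintro ⟨a, b⟩ hp
  rw [invSet_joinPerm]
  exact ⟨hp.1, Relation.TransGen.single (Or.inr hp)⟩

lemma joinPerm_le {ω : Equiv.Perm (Fin k)} (h1 : InvSet σ ⊆ InvSet ω)
    (h2 : InvSet τ ⊆ InvSet ω) : InvSet (joinPerm σ τ) ⊆ InvSet ω := by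
  rintro ⟨a, b⟩ hp
  rw [invSet_joinPerm] at hp
  have hC : Crel σ τ a b := hp.2
  clear hp
  induction hC with
  | single h =>
    rcases h with h | h
    · exact h1 h
    · exact h2 h
  | tail _ h ih =>
    rcases h with h | h
    · exact invSet_closed ih (h1 h)
    · exact invSet_closed ih (h2 h)

end Join

theorem stmt3 {k : ℕ} (σ τ : Equiv.Perm (Fin k)) :
    ∃! Δ : Equiv.Perm (Fin k),
      WeakLE σ Δ ∧ WeakLE τ Δ ∧
        ∀ ω : Equiv.Perm (Fin k), WeakLE σ ω → WeakLE τ ω → WeakLE Δ ω := by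
  refine ⟨joinPerm σ τ, ⟨?_, ?_, ?_⟩, ?_⟩
  · exact weakLE_of_invSet_subset invSet_subset_joinPerm_left
  · exact weakLE_of_invSet_subset invSet_subset_joinPerm_right
  · intro ω h1 h2
    exact weakLE_of_invSet_subset
      (joinPerm_le (invSet_subset_of_weakLE h1) (invSet_subset_of_weakLE h2))
  · rintro Δ' ⟨h1, h2, h3⟩
    apply eq_of_invSet_eq
    apply Set.Subset.antisymm
    · exact invSet_subset_of_weakLE (h3 _
        (weakLE_of_invSet_subset invSet_subset_joinPerm_left)
        (weakLE_of_invSet_subset invSet_subset_joinPerm_right))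
    · exact invSet_subset_of_weakLE (weakLE_of_invSet_subset (joinPerm_le
        (invSet_subset_of_weakLE h1) (invSet_subset_of_weakLE h2)))

end WeakBruhat
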